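/- Let T be a bounded operator with closed range on a complex Hilbert space and let T = U − V be a proper splitting. Then the following are equivalent: (i) T† V is compact; (ii) U† V is compact; (iii) V is compact. -/

import Mathlib

open ContinuousLinearMap

/-- `Td` is the Moore–Penrose inverse of `T`. -/
def IsMoorePenroseInverse {H : Type*} [NormedAddCommGroup H] [InnerProductSpace ℂ H]
    [CompleteSpace H] (T Td : H →L[ℂ] H) : Prop :=
  T ∘L Td ∘L T = T ∧ Td ∘L T ∘L Td = Td ∧
    IsSelfAdjoint (T ∘L Td) ∧ IsSelfAdjoint (Td ∘L T)
/-- For a proper splitting `T = U - V` of a closed range operator, the following are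
equivalent: `T†V` compact, `U†V` compact, `V` compact. -/
theorem compact_tfae_of_proper_splitting
    {H : Type*} [NormedAddCommGroup H] [InnerProductSpace ℂ H] [CompleteSpace H]
    (T U V Ud Td : H →L[ℂ] H)
    (hTcr : IsClosed (LinearMap.range (T : H →ₗ[ℂ] H) : Set H))
    (hsplit : T = U - V)
    (hran : LinearMap.range (U : H →ₗ[ℂ] H) = LinearMap.range (T : H →ₗ[ℂ] H))
    (hker : LinearMap.ker (U : H →ₗ[ℂ] H) = LinearMap.ker (T : H →ₗ[ℂ] H))
    (hUd : IsMoorePenroseInverse U Ud) (hTd : IsMoorePenroseInverse T Td) :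
    (IsCompactOperator ⇑(Td ∘L V) ↔ IsCompactOperator ⇑(Ud ∘L V)) ∧
      (IsCompactOperator ⇑(Ud ∘L V) ↔ IsCompactOperator ⇑V) := by
  -- range of V is contained in range of T = range of U
  have hV : V = U - T := by rw [hsplit]; abel
  have hVranT : ∀ x, V x ∈ LinearMap.range (T : H →ₗ[ℂ] H) := by
    intro x
    have hUx : U x ∈ LinearMap.range (T : H →ₗ[ℂ] H) := hran ▸ LinearMap.mem_range_self (U : H →ₗ[ℂ] H) x
    have : V x = U x - T x := by rw [hV]; rfl
    rw [this]
    exact Submodule.sub_mem _ hUx (LinearMap.mem_range_self (T : H →ₗ[ℂ] H) x)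
  -- T Td fixes range of T
  have hTfix : ∀ y ∈ LinearMap.range (T : H →ₗ[ℂ] H), T (Td y) = y := by
    rintro y ⟨z, rfl⟩
    have := congrArg (fun S : H →L[ℂ] H => S z) hTd.1
    simpa using this
  have hUfix : ∀ y ∈ LinearMap.range (U : H →ₗ[ℂ] H), U (Ud y) = y := by
    rintro y ⟨z, rfl⟩
    have := congrArg (fun S : H →L[ℂ] H => S z) hUd.1
    simpa using this
  have hVranU : ∀ x, V x ∈ LinearMap.range (U : H →ₗ[ℂ] H) := fun x => hran ▸ hVranT x
  -- key factorizations (as plain functions)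
  have h1 : ⇑(Ud ∘L V) = ⇑(Ud ∘L T) ∘ ⇑(Td ∘L V) := by
    funext x
    simp only [Function.comp_apply, coe_comp', Function.comp]
    rw [hTfix _ (hVranT x)]
  have h2 : ⇑(Td ∘L V) = ⇑(Td ∘L U) ∘ ⇑(Ud ∘L V) := by
    funext x
    simp only [Function.comp_apply, coe_comp', Function.comp]
    rw [hUfix _ (hVranU x)]
  have h3 : ⇑V = ⇑U ∘ ⇑(Ud ∘L V) := by
    funext x
    simp only [Function.comp_apply, coe_comp', Function.comp]
    rw [hUfix _ (hVranU x)]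
  constructor
  · constructor
    · intro h
      rw [h1]
      exact h.clm_comp (Ud ∘L T)
    · intro h
      rw [h2]
      exact h.clm_comp (Td ∘L U)
  · constructor
    · intro h
      rw [h3]
      exact h.clm_comp U
    · intro h
      exact h.clm_comp Ud
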